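/- For any discrete group G and any p in [1,∞), the commutant of the image of the p-left regular representation equals the double commutant of the image of the p-right regular representation, i.e., λ(G)' = ρ(G)'' as sets of bounded operators on ℓ^p(G); consequently also ρ(G)' = λ(G)''. -/

import Mathlib

open scoped ENNReal

/-- Evaluation at a point as a continuous linear functional on `ℓ^p`. -/
noncomputable def lpEval {α : Type*} (p : ℝ≥0∞) [Fact (1 ≤ p)] (x : α) :
    lp (fun _ : α => ℂ) p →L[ℂ] ℂ :=
  LinearMap.mkContinuous
    { toFun := fun f => f x
      map_add' := fun f g => congrFun (lp.coeFn_add f g) x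
      map_smul' := fun c f => by simp [congrFun (lp.coeFn_smul c f) x] }
    1 fun f => by
      simpa using lp.norm_apply_le_norm
        (zero_lt_one.trans_le (Fact.out : (1:ℝ≥0∞) ≤ p)).ne' f x

lemma lp_hasSum_eval {α : Type*} [DecidableEq α] (p : ℝ≥0∞) [Fact (1 ≤ p)] (hp : p ≠ ∞)
    (S : lp (fun _ : α => ℂ) p →L[ℂ] lp (fun _ : α => ℂ) p) (f : lp (fun _ : α => ℂ) p)
    (x : α) :
    HasSum (fun h => f h * (S (lp.single p h 1)) x) ((S f) x) := by
  have h1 := ((lpEval p x).comp S).hasSum (lp.hasSum_single hp f)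
  have h2 : (fun h => ((lpEval p x).comp S) (lp.single p h (f h)))
      = fun h => f h * (S (lp.single p h 1)) x := by
    funext h
    have h3 : lp.single p h (f h) = f h • (lp.single p h 1 : lp (fun _ : α => ℂ) p) := by
      simpa using lp.single_smul (E := fun _ : α => ℂ) p h (f h) 1
    rw [h3, map_smul]
    simp [lpEval, smul_eq_mul, LinearMap.mkContinuous_apply]
  rw [h2] at h1
  exact h1

lemma lp_single_coord {α : Type*} [DecidableEq α] (p : ℝ≥0∞) (h x : α) :
    (lp.single p h 1 : lp (fun _ : α => ℂ) p) x = if x = h then 1 else 0 := by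
  rcases eq_or_ne x h with rfl | hx
  · simp [lp.single_apply_self]
  · simp [lp.single_apply_ne p h _ hx, hx]

lemma lp_coord_formula {α : Type*} [DecidableEq α] (p : ℝ≥0∞) [Fact (1 ≤ p)] (hp : p ≠ ∞)
    (A : lp (fun _ : α => ℂ) p →L[ℂ] lp (fun _ : α => ℂ) p) (φ : α ≃ α)
    (hA : ∀ h, A (lp.single p h 1) = lp.single p (φ h) 1)
    (f : lp (fun _ : α => ℂ) p) (x : α) :
    (A f) x = f (φ.symm x) := by
  have h1 := lp_hasSum_eval p hp A f x
  have h2 : (fun h => f h * (A (lp.single p h 1)) x)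
      = fun h => if h = φ.symm x then f (φ.symm x) else 0 := by
    funext h
    rw [hA, lp_single_coord]
    rcases eq_or_ne h (φ.symm x) with rfl | hh
    · simp
    · have hx : x ≠ φ h := by
        intro hx
        exact hh (by rw [hx, Equiv.symm_apply_apply])
      simp [hx, hh]
  rw [h2] at h1
  exact h1.unique (hasSum_ite_eq _ _)

/-- The commutant of a set of bounded operators. -/
def commutant {E : Type*} [NormedAddCommGroup E] [NormedSpace ℂ E]
    (S : Set (E →L[ℂ] E)) : Set (E →L[ℂ] E) :=
  {T | ∀ A ∈ S, T.comp A = A.comp T}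

/-- `λ(G)' = ρ(G)''` and `ρ(G)' = λ(G)''` for the p-left and p-right regular
representations of a discrete group `G` on `ℓ^p(G)`. -/
theorem commutant_left_regular_eq_double_commutant_right_regular
    (G : Type*) [Group G] [Countable G] [DecidableEq G]
    (p : ℝ≥0∞) [Fact (1 ≤ p)] (hp : p ≠ ∞)
    (lam rho : G → (lp (fun _ : G => ℂ) p →L[ℂ] lp (fun _ : G => ℂ) p))
    (hlam : ∀ g h : G, lam g (lp.single p h 1) = lp.single p (g * h) 1)
    (hrho : ∀ g h : G, rho g (lp.single p h 1) = lp.single p (h * g⁻¹) 1) :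
    commutant (Set.range lam) = commutant (commutant (Set.range rho)) ∧
      commutant (Set.range rho) = commutant (commutant (Set.range lam)) := by
  -- coordinate formulas for lam and rho
  have hlamc : ∀ (g : G) f (x : G), (lam g f) x = f (g⁻¹ * x) := by
    intro g f x
    have := lp_coord_formula p hp (lam g) (Equiv.mulLeft g)
      (fun h => by simpa using hlam g h) f x
    simpa using this
  have hrhoc : ∀ (g : G) f (x : G), (rho g f) x = f (x * g) := by
    intro g f x
    have := lp_coord_formula p hp (rho g) (Equiv.mulRight g⁻¹)
      (fun h => by simpa using hrho g h) f x
    simpa using this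
  -- extensionality on singles
  have hext : ∀ (A B : lp (fun _ : G => ℂ) p →L[ℂ] lp (fun _ : G => ℂ) p),
      (∀ g : G, A (lp.single p g 1) = B (lp.single p g 1)) → A = B := by
    intro A B hAB
    refine ContinuousLinearMap.ext fun f => ?_
    have hA := A.hasSum (lp.hasSum_single hp f)
    have hB := B.hasSum (lp.hasSum_single hp f)
    have heq : (fun g => A (lp.single p g (f g))) = fun g => B (lp.single p g (f g)) := by
      funext g
      have h1 : lp.single p g (f g) = f g • (lp.single p g 1 : lp (fun _ : G => ℂ) p) := by
        simpa using lp.single_smul (E := fun _ : G => ℂ) p g (f g) 1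
      rw [h1, map_smul, map_smul, hAB]
    rw [heq] at hA
    exact hA.unique hB
  -- lam and rho commute
  have hcomm : ∀ g h : G, (lam g).comp (rho h) = (rho h).comp (lam g) := by
    intro g h
    apply hext
    intro k
    simp [ContinuousLinearMap.comp_apply, hlam, hrho, mul_assoc]
  have hlam_mem : ∀ g : G, lam g ∈ commutant (Set.range rho) := by
    rintro g A ⟨h, rfl⟩
    exact hcomm g h
  have hrho_mem : ∀ g : G, rho g ∈ commutant (Set.range lam) := by
    rintro g A ⟨h, rfl⟩
    exact (hcomm h g).symm
  -- the hard part
  have hmain : ∀ T ∈ commutant (Set.range lam), ∀ S ∈ commutant (Set.range rho),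
      T.comp S = S.comp T := by
    intro T hT S hS
    set ξ := T (lp.single p (1:G) 1) with hξ
    set η := S (lp.single p (1:G) 1) with hη
    have hTg : ∀ g : G, T (lp.single p g 1) = lam g ξ := by
      intro g
      have h2 := hT (lam g) ⟨g, rfl⟩
      have h3 := DFunLike.congr_fun h2 (lp.single p (1:G) 1)
      simp only [ContinuousLinearMap.comp_apply] at h3
      rw [hlam, mul_one] at h3
      exact h3
    have hSg : ∀ g : G, S (lp.single p g 1) = rho g⁻¹ η := by
      intro g
      have h2 := hS (rho g⁻¹) ⟨g⁻¹, rfl⟩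
      have h3 := DFunLike.congr_fun h2 (lp.single p (1:G) 1)
      simp only [ContinuousLinearMap.comp_apply] at h3
      rw [hrho, one_mul, inv_inv] at h3
      exact h3
    apply hext
    intro g
    simp only [ContinuousLinearMap.comp_apply, hSg, hTg]
    apply lp.ext
    funext x
    have hs1 : HasSum (fun h => η (h * g⁻¹) * ξ (h⁻¹ * x)) ((T (rho g⁻¹ η)) x) := by
      have := lp_hasSum_eval p hp T (rho g⁻¹ η) x
      simpa [hrhoc, hTg, hlamc] using this
    have hs2 : HasSum (fun h => ξ (g⁻¹ * h) * η (x * h⁻¹)) ((S (lam g ξ)) x) := by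
      have := lp_hasSum_eval p hp S (lam g ξ) x
      simpa [hlamc, hSg, hrhoc] using this
    let e : G ≃ G :=
      ⟨fun h => x * h⁻¹ * g, fun h => (x⁻¹ * h * g⁻¹)⁻¹, fun h => by group, fun h => by group⟩
    have hs3 : HasSum ((fun h => η (h * g⁻¹) * ξ (h⁻¹ * x)) ∘ e) ((T (rho g⁻¹ η)) x) :=
      (Equiv.hasSum_iff e).mpr hs1
    have hfe : ((fun h => η (h * g⁻¹) * ξ (h⁻¹ * x)) ∘ e)
        = fun h => ξ (g⁻¹ * h) * η (x * h⁻¹) := by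
      funext h
      have e1 : x * h⁻¹ * g * g⁻¹ = x * h⁻¹ := by group
      have e2 : (x * h⁻¹ * g)⁻¹ * x = g⁻¹ * h := by group
      simp only [Function.comp, e, Equiv.coe_fn_mk, e1, e2]
      ring
    rw [hfe] at hs3
    exact hs3.unique hs2
  constructor
  · apply Set.Subset.antisymm
    · intro T hT A hA
      exact hmain T hT A hA
    · rintro T hT A ⟨g, rfl⟩
      exact hT (lam g) (hlam_mem g)
  · apply Set.Subset.antisymm
    · intro S hS A hA
      exact (hmain A hA S hS).symm
    · rintro S hS A ⟨g, rfl⟩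
      exact hS (rho g) (hrho_mem g)
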